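/- arXiv:1907.03828 — 3 statements merged into one kernel-verified Lean document; each statement's English description precedes it below -/
import Mathlib

section
/- Let X be a finite metric space and λΔ a simplex of cardinality strictly greater than #X, with all non-zero distances equal to λ > 0. Then 2 d_GH(λΔ, X) = max{λ, diam X − λ}. -/
universe u_1 u_2

open Metric

/-- The Gromov–Hausdorff distance between two (bounded) metric spaces: the
infimum of Hausdorff distances between the canonical copies of `X` and `Y`
inside their disjoint union, over all pseudometrics on the disjoint union
extending the metrics of `X` and of `Y`. -/
noncomputable def ghDist (X : Type*) (Y : Type*) [MetricSpace X] [MetricSpace Y] : ℝ :=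
  sInf { r : ℝ | ∃ m : PseudoMetricSpace (X ⊕ Y),
    (∀ x x' : X, @Dist.dist _ m.toDist (Sum.inl x) (Sum.inl x') = dist x x') ∧
    (∀ y y' : Y, @Dist.dist _ m.toDist (Sum.inr y) (Sum.inr y') = dist y y') ∧
    r = @Metric.hausdorffDist (X ⊕ Y) m
        (Set.range Sum.inl) (Set.range Sum.inr) }

/-- Candidate distance on the disjoint union of a simplex `S` and `X`. -/
noncomputable def sumDist {S X : Type*} [MetricSpace S] [MetricSpace X]
    (g : S → X) (l K : ℝ) : S ⊕ X → S ⊕ X → ℝ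
  | .inl s, .inl s' => dist s s'
  | .inr x, .inr x' => dist x x'
  | .inl s, .inr x => K / 2 + min (dist (g s) x) l
  | .inr x, .inl s => K / 2 + min (dist (g s) x) l

lemma sumDist_triangle {S X : Type*} [MetricSpace S] [MetricSpace X]
    (g : S → X) (l K : ℝ) (hl0 : 0 ≤ l) (hlK : l ≤ K)
    (hsim : ∀ s s' : S, s ≠ s' → dist s s' = l)
    (hX : ∀ x x' : X, dist x x' ≤ K + l) :
    ∀ a b c, sumDist g l K a c ≤ sumDist g l K a b + sumDist g l K b c := by
  have hK0 : 0 ≤ K := hl0.trans hlK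
  have hS : ∀ s s' : S, dist s s' ≤ l := by
    intro s s'
    by_cases h : s = s'
    · simp [h, hl0]
    · rw [hsim s s' h]
  rintro (s | x) (s' | x') (s'' | x'') <;> simp only [sumDist]
  · exact dist_triangle _ _ _
  · -- inl, inl, inr
    by_cases h : s = s'
    · subst h; simp
    · rw [hsim s s' h]
      have h1 : min (dist (g s) x'') l ≤ l := min_le_right _ _
      have h2 : (0:ℝ) ≤ min (dist (g s') x'') l :=
        le_min dist_nonneg hl0
      linarith
  · -- inl, inr, inl
    have h1 : (0:ℝ) ≤ min (dist (g s) x') l := le_min dist_nonneg hl0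
    have h2 : (0:ℝ) ≤ min (dist (g s'') x') l := le_min dist_nonneg hl0
    have := hS s s''
    linarith
  · -- inl, inr, inr
    have h1 : min (dist (g s) x'') l ≤ min (dist (g s) x') l + dist x' x'' := by
      have a1 : dist (g s) x'' ≤ dist (g s) x' + dist x' x'' := dist_triangle _ _ _
      have a2 : l ≤ l + dist x' x'' := by linarith [dist_nonneg (x := x') (y := x'')]
      rcases le_total (dist (g s) x') l with h | h
      · rw [min_eq_left h]; exact le_trans (min_le_left _ _) a1
      · rw [min_eq_right h]; exact le_trans (min_le_right _ _) a2
    linarith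
  · -- inr, inl, inl
    by_cases h : s' = s''
    · subst h; simp
    · rw [hsim s' s'' h]
      have h1 : min (dist (g s'') x) l ≤ l := min_le_right _ _
      have h2 : (0:ℝ) ≤ min (dist (g s') x) l := le_min dist_nonneg hl0
      linarith
  · -- inr, inl, inr
    have t : dist x x'' ≤ dist (g s') x + dist (g s') x'' := by
      rw [dist_comm (g s') x]; exact dist_triangle _ _ _
    have hD : dist x x'' ≤ K + l := hX x x''
    have n1 : (0:ℝ) ≤ dist (g s') x := dist_nonneg
    have n2 : (0:ℝ) ≤ dist (g s') x'' := dist_nonneg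
    rcases le_total (dist (g s') x) l with h1 | h1 <;>
      rcases le_total (dist (g s') x'') l with h2 | h2 <;>
      simp only [min_eq_left, min_eq_right, h1, h2] <;> linarith
  · -- inr, inr, inl
    have h1 : min (dist (g s'') x) l ≤ min (dist (g s'') x') l + dist x x' := by
      have a1 : dist (g s'') x ≤ dist (g s'') x' + dist x' x := dist_triangle _ _ _
      have a2 : l ≤ l + dist x x' := by linarith [dist_nonneg (x := x) (y := x')]
      rcases le_total (dist (g s'') x') l with h | h
      · rw [min_eq_left h]
        calc min (dist (g s'') x) l ≤ dist (g s'') x := min_le_left _ _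
          _ ≤ dist (g s'') x' + dist x x' := by rw [dist_comm x x']; exact a1
      · rw [min_eq_right h]; exact le_trans (min_le_right _ _) a2
    linarith
  · exact dist_triangle _ _ _

/-- If `X` is a finite metric space and `S` is a simplex (all of whose non-zero
distances equal `λ > 0`) of cardinality strictly greater than that of `X`, then
`2 d_GH(S, X) = max {λ, diam X − λ}`. -/
theorem two_ghDist_simplex_of_card_lt {X : Type u_1} [MetricSpace X] [Finite X] [Nonempty X]
    (S : Type u_2) [MetricSpace S]
    (l : ℝ) (hl : 0 < l)
    (hsim : ∀ s s' : S, s ≠ s' → dist s s' = l)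
    (hcard : Cardinal.lift.{u_2} (Cardinal.mk X) < Cardinal.lift.{u_1} (Cardinal.mk S)) :
    2 * ghDist S X = max l (diam (Set.univ : Set X) - l) := by
  classical
  set D := diam (Set.univ : Set X) with hD
  set K := max l (D - l) with hKdef
  obtain ⟨f⟩ : Nonempty (X ↪ S) := Cardinal.lift_mk_le'.1 hcard.le
  have : Nonempty S := ⟨f (Classical.arbitrary X)⟩
  set g : S → X := Function.invFun f with hg
  have gsurj : Function.Surjective g := Function.invFun_surjective f.injective
  have hKl : l ≤ K := le_max_left _ _
  have hKD : D - l ≤ K := le_max_right _ _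
  have hK0 : 0 < K := lt_of_lt_of_le hl hKl
  have hSd : ∀ s s' : S, dist s s' ≤ l := by
    intro s s'
    by_cases h : s = s'
    · simp [h, hl.le]
    · rw [hsim s s' h]
  have hXd : ∀ x x' : X, dist x x' ≤ D :=
    fun x x' => dist_le_diam_of_mem Set.finite_univ.isBounded (Set.mem_univ x) (Set.mem_univ x')
  have hXK : ∀ x x' : X, dist x x' ≤ K + l := fun x x' => by
    have := hXd x x'; linarith
  -- the set of admissible Hausdorff distances
  set T : Set ℝ := { r : ℝ | ∃ m : PseudoMetricSpace (S ⊕ X),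
    (∀ x x' : S, @Dist.dist _ m.toDist (Sum.inl x) (Sum.inl x') = dist x x') ∧
    (∀ y y' : X, @Dist.dist _ m.toDist (Sum.inr y) (Sum.inr y') = dist y y') ∧
    r = @Metric.hausdorffDist (S ⊕ X) m
        (Set.range Sum.inl) (Set.range Sum.inr) } with hT
  -- lower bound
  have lower : ∀ r ∈ T, K / 2 ≤ r := by
    rintro r ⟨m, hm1, hm2, rfl⟩
    letI := m
    set A : Set (S ⊕ X) := Set.range Sum.inl with hA
    set B : Set (S ⊕ X) := Set.range Sum.inr with hB
    set hd := hausdorffDist A B with hhd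
    have hd0 : 0 ≤ hd := hausdorffDist_nonneg
    have hfin : EMetric.hausdorffEdist A B ≠ ⊤ := by
      apply hausdorffEdist_ne_top_of_nonempty_of_bounded
      · exact Set.range_nonempty _
      · exact Set.range_nonempty _
      · rw [Metric.isBounded_iff]
        exact ⟨l, by rintro _ ⟨s, rfl⟩ _ ⟨s', rfl⟩; rw [hm1]; exact hSd s s'⟩
      · rw [Metric.isBounded_iff]
        exact ⟨D, by rintro _ ⟨x, rfl⟩ _ ⟨x', rfl⟩; rw [hm2]; exact hXd x x'⟩
    have claim1 : l ≤ 2 * hd := by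
      apply le_of_forall_pos_le_add
      intro ε hε
      have hlt : hausdorffDist A B < hd + ε / 2 := by rw [← hhd]; linarith
      have H : ∀ s : S, ∃ x : X, dist (Sum.inl s : S ⊕ X) (Sum.inr x) < hd + ε / 2 := by
        intro s
        obtain ⟨y, hy, hdy⟩ :=
          exists_dist_lt_of_hausdorffDist_lt (Set.mem_range_self s) hlt hfin
        obtain ⟨x, rfl⟩ := hy
        exact ⟨x, hdy⟩
      choose φ hφ using H
      have hni : ¬ Function.Injective φ := fun hinj =>
        absurd hcard (not_lt.2 (Cardinal.lift_mk_le'.2 ⟨⟨φ, hinj⟩⟩))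
      obtain ⟨s, s', heq, hne⟩ := Function.not_injective_iff.1 hni
      have e1 := hφ s
      have e2 := hφ s'
      rw [← heq] at e2
      have tri : dist (Sum.inl s : S ⊕ X) (Sum.inl s') ≤
          dist (Sum.inl s : S ⊕ X) (Sum.inr (φ s)) +
            dist (Sum.inl s' : S ⊕ X) (Sum.inr (φ s)) := by
        rw [dist_comm (Sum.inl s' : S ⊕ X)]
        exact dist_triangle _ _ _
      rw [hm1, hsim s s' hne] at tri
      linarith
    have claim2 : D ≤ 2 * hd + l := by
      apply diam_le_of_forall_dist_le (by linarith)
      intro x _ x' _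
      apply le_of_forall_pos_le_add
      intro ε hε
      have hlt : hausdorffDist A B < hd + ε / 2 := by rw [← hhd]; linarith
      obtain ⟨a, ha, hda⟩ :=
        exists_dist_lt_of_hausdorffDist_lt' (Set.mem_range_self x) hlt hfin
      obtain ⟨s, rfl⟩ := ha
      obtain ⟨a', ha', hda'⟩ :=
        exists_dist_lt_of_hausdorffDist_lt' (Set.mem_range_self x') hlt hfin
      obtain ⟨s', rfl⟩ := ha'
      have tri : dist (Sum.inr x : S ⊕ X) (Sum.inr x') ≤
          dist (Sum.inl s : S ⊕ X) (Sum.inr x) + dist (Sum.inl s : S ⊕ X) (Sum.inl s') +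
            dist (Sum.inl s' : S ⊕ X) (Sum.inr x') := by
        rw [dist_comm (Sum.inl s : S ⊕ X) (Sum.inr x)]
        exact dist_triangle4 _ _ _ _
      rw [hm2, hm1] at tri
      have := hSd s s'
      linarith
    have hKle : K ≤ 2 * hd := max_le (by linarith) (by linarith)
    linarith
  -- upper bound: explicit pseudometric
  letI m : PseudoMetricSpace (S ⊕ X) :=
    { dist := sumDist g l K
      dist_self := by rintro (s | x) <;> simp [sumDist]
      dist_comm := by
        rintro (s | x) (s' | x') <;> simp [sumDist, dist_comm]
      dist_triangle := sumDist_triangle g l K hl.le hKl hsim hXK }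
  have hub : hausdorffDist (Set.range (Sum.inl : S → S ⊕ X)) (Set.range Sum.inr) ≤ K / 2 := by
    apply hausdorffDist_le_of_mem_dist (show (0:ℝ) ≤ K / 2 by linarith)
    · rintro _ ⟨s, rfl⟩
      refine ⟨Sum.inr (g s), Set.mem_range_self _, ?_⟩
      show sumDist g l K _ _ ≤ K / 2
      simp [sumDist, min_eq_left hl.le]
    · rintro _ ⟨x, rfl⟩
      obtain ⟨s, rfl⟩ := gsurj x
      refine ⟨Sum.inl s, Set.mem_range_self _, ?_⟩
      show sumDist g l K _ _ ≤ K / 2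
      simp [sumDist, min_eq_left hl.le]
  have hmem : hausdorffDist (Set.range (Sum.inl : S → S ⊕ X)) (Set.range Sum.inr) ∈ T :=
    ⟨m, fun _ _ => rfl, fun _ _ => rfl, rfl⟩
  have h1 : sInf T ≤ K / 2 := le_trans (csInf_le ⟨K / 2, lower⟩ hmem) hub
  have h2 : K / 2 ≤ sInf T := le_csInf ⟨_, hmem⟩ lower
  show 2 * sInf T = K
  linarith
end

section
/- Let X be a finite metric space and G a minimal spanning tree on X. Then X is ultrametric if and only if for every pair of distinct points v, w ∈ X, |vw| equals the maximum of the lengths of the edges on the unique path in G from v to w. -/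
open Metric

/-- The length of an edge of a graph on a metric space: the distance between
its endpoints. -/
noncomputable def edgeLen {X : Type*} [MetricSpace X] : Sym2 X → ℝ :=
  Sym2.lift ⟨fun x y => dist x y, fun x y => dist_comm x y⟩

/-- The total length of a graph on a metric space: the sum of the lengths of
its edges. -/
noncomputable def graphLength {X : Type*} [MetricSpace X] (G : SimpleGraph X) : ℝ :=
  ∑ᶠ e ∈ G.edgeSet, edgeLen e

/-- `G` is a minimal spanning tree on the metric space `X`: a tree with vertex
set `X` of minimal total length among all such trees. -/
def IsMST {X : Type*} [MetricSpace X] (G : SimpleGraph X) : Prop :=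
  G.IsTree ∧ ∀ H : SimpleGraph X, H.IsTree → graphLength G ≤ graphLength H

/-- The path-max property for a graph `G` on a metric space: for any two
distinct vertices `v, w`, the distance `|vw|` equals the maximum of the
lengths of the edges on any (in a tree: the unique) path in `G` from `v`
to `w`. -/
def PathMaxProperty {X : Type*} [MetricSpace X] (G : SimpleGraph X) : Prop :=
  ∀ v w : X, v ≠ w → ∀ p : G.Walk v w, p.IsPath →
    (∃ e ∈ p.edges, edgeLen e = dist v w) ∧ ∀ e ∈ p.edges, edgeLen e ≤ dist v w

lemma edgeLen_mk {X : Type*} [MetricSpace X] (a b : X) : edgeLen s(a, b) = dist a b := rfl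

/-- If every edge of `G` joins vertices reachable in `H`, then `G`-reachability
implies `H`-reachability. -/
lemma reachable_of_forall_adj {V : Type*} {G H : SimpleGraph V}
    (h : ∀ x y, G.Adj x y → H.Reachable x y) {x y : V} (hr : G.Reachable x y) :
    H.Reachable x y := by
  obtain ⟨p⟩ := hr
  induction p with
  | nil => exact SimpleGraph.Reachable.refl _
  | cons ha _ ih => exact (h _ _ ha).trans ih

/-- Splitting a trail at an edge: both endpoints of the trail can reach the
respective endpoints of the edge without using the edge. -/
lemma exists_reachable_of_mem_edges {V : Type*} {G : SimpleGraph V} {v w : V}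
    (p : G.Walk v w) (hnd : p.edges.Nodup) {e : Sym2 V} (he : e ∈ p.edges) :
    ∃ a b : V, e = s(a, b) ∧ (G.deleteEdges {e}).Reachable v a ∧
      (G.deleteEdges {e}).Reachable b w := by
  induction p with
  | nil => simp at he
  | @cons x u y ha q ih =>
    rw [SimpleGraph.Walk.edges_cons] at he hnd
    rcases List.mem_cons.mp he with rfl | he'
    · refine ⟨x, u, rfl, SimpleGraph.Reachable.refl _, ⟨q.toDeleteEdges _ ?_⟩⟩
      intro f hf
      simp only [Set.mem_singleton_iff]
      rintro rfl
      exact (List.nodup_cons.mp hnd).1 hf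
    · obtain ⟨a, b, heq, h1, h2⟩ := ih (List.nodup_cons.mp hnd).2 he'
      refine ⟨a, b, heq, SimpleGraph.Reachable.trans ?_ h1, h2⟩
      refine SimpleGraph.Adj.reachable ?_
      rw [SimpleGraph.deleteEdges_adj]
      refine ⟨ha, ?_⟩
      simp only [Set.mem_singleton_iff]
      rintro rfl
      exact (List.nodup_cons.mp hnd).1 he'

/-- The key exchange argument: in a minimal spanning tree, every edge on a path
from `v` to `w` has length at most `dist v w`. -/
lemma edgeLen_le_of_isMST {X : Type*} [MetricSpace X] [Finite X] {G : SimpleGraph X}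
    (hG : IsMST G) {v w : X} (hvw : v ≠ w) (p : G.Walk v w) (hp : p.IsPath)
    {e : Sym2 X} (he : e ∈ p.edges) : edgeLen e ≤ dist v w := by
  classical
  by_cases hevw : e = s(v, w)
  · subst hevw
    rw [edgeLen_mk]
  -- `v` and `w` are not adjacent in `G` (else the unique path would be the edge itself)
  have heG : e ∈ G.edgeSet := p.edges_subset_edgeSet he
  have hvwG : s(v, w) ∉ G.edgeSet := by
    intro hadj
    have hadj' : G.Adj v w := (G.mem_edgeSet).mp hadj
    have hsp : (SimpleGraph.Walk.cons hadj' SimpleGraph.Walk.nil).IsPath := by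
      simp [SimpleGraph.Walk.isPath_def, hvw]
    have huniq := hG.1.IsAcyclic.path_unique ⟨p, hp⟩ ⟨_, hsp⟩
    have hpe : p = SimpleGraph.Walk.cons hadj' SimpleGraph.Walk.nil :=
      congrArg Subtype.val huniq
    rw [hpe] at he
    simp only [SimpleGraph.Walk.edges_cons, SimpleGraph.Walk.edges_nil,
      List.mem_singleton] at he
    exact hevw he
  obtain ⟨a, b, heq, h1, h2⟩ := exists_reachable_of_mem_edges p hp.edges_nodup he
  set G' := G.deleteEdges {e} with hG'def
  set H := G' ⊔ SimpleGraph.fromEdgeSet {s(v, w)} with hHdef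
  have hG'le : G' ≤ G := SimpleGraph.deleteEdges_le _
  have hG'H : G' ≤ H := le_sup_left
  have hHvw : H.Adj v w := by
    rw [hHdef, SimpleGraph.sup_adj]
    right
    rw [SimpleGraph.fromEdgeSet_adj]
    exact ⟨rfl, hvw⟩
  have hHe : H.edgeSet = (G.edgeSet \ {e}) ∪ {s(v, w)} := by
    rw [hHdef, SimpleGraph.edgeSet_sup, hG'def, SimpleGraph.edgeSet_deleteEdges,
      SimpleGraph.edgeSet_fromEdgeSet]
    congr 1
    ext f
    simp only [Set.mem_diff, Set.mem_singleton_iff, Set.mem_setOf_eq]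
    constructor
    · exact fun h => h.1
    · rintro rfl
      exact ⟨rfl, by simp [Sym2.isDiag_iff_proj_eq, hvw]⟩
  -- Connectivity of H
  have hconn : H.Connected := by
    have key : ∀ x y : X, G.Adj x y → H.Reachable x y := by
      intro x y hxy
      by_cases hxye : s(x, y) = e
      · have hva : H.Reachable v a := h1.mono hG'H
        have hbw : H.Reachable b w := h2.mono hG'H
        rw [heq, Sym2.eq_iff] at hxye
        rcases hxye with ⟨rfl, rfl⟩ | ⟨rfl, rfl⟩
        · exact (hva.symm.trans hHvw.reachable).trans hbw.symm
        · exact (hbw.trans hHvw.symm.reachable).trans hva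
      · refine SimpleGraph.Adj.reachable (hG'H ?_)
        rw [hG'def, SimpleGraph.deleteEdges_adj]
        exact ⟨hxy, by simpa using hxye⟩
    have : Nonempty X := ⟨v⟩
    constructor
    intro x y
    exact reachable_of_forall_adj key (hG.1.isConnected.preconnected x y)
  -- Acyclicity of H
  have hacyc : H.IsAcyclic := by
    intro u c hc
    by_cases hvwc : s(v, w) ∈ c.edges
    · have hkey := (SimpleGraph.adj_and_reachable_delete_edges_iff_exists_cycle
        (G := H)).mpr ⟨u, c, hc, hvwc⟩
      obtain ⟨p', hp'⟩ := SimpleGraph.reachable_delete_edges_iff_exists_walk.mp hkey.2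
      have hsub : ∀ f ∈ p'.edges, f ∈ G.edgeSet := by
        intro f hf
        have hfH := p'.edges_subset_edgeSet hf
        rw [hHe] at hfH
        rcases hfH with ⟨hfG, _⟩ | hfs
        · exact hfG
        · exfalso
          have hfvw : f = s(v, w) := by simpa using hfs
          exact hp' (hfvw ▸ hf)
      set q := p'.transfer G hsub with hqdef
      have hq : e ∉ q.edges := by
        rw [hqdef, SimpleGraph.Walk.edges_transfer]
        intro hf
        have hfH := p'.edges_subset_edgeSet hf
        rw [hHe] at hfH
        rcases hfH with ⟨_, hne⟩ | hfs
        · exact hne rfl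
        · exact hevw (by simpa using hfs)
      have huniq := hG.1.IsAcyclic.path_unique ⟨p, hp⟩ q.toPath
      have hpe : p = (q.toPath : G.Walk v w) := congrArg Subtype.val huniq
      rw [hpe] at he
      exact hq (SimpleGraph.Walk.edges_toPath_subset q he)
    · have hsub : ∀ f ∈ c.edges, f ∈ G.edgeSet := by
        intro f hf
        have hfH := c.edges_subset_edgeSet hf
        rw [hHe] at hfH
        rcases hfH with ⟨hfG, _⟩ | hfs
        · exact hfG
        · exfalso
          have hfvw : f = s(v, w) := by simpa using hfs
          exact hvwc (hfvw ▸ hf)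
      exact hG.1.IsAcyclic (c.transfer G hsub) (hc.transfer hsub)
  have hHtree : H.IsTree := ⟨hconn, hacyc⟩
  -- length computations
  have hcast : Finite (Sym2 X) := inferInstance
  have hfinS : (G.edgeSet \ {e}).Finite := Set.toFinite _
  have hdisj1 : Disjoint (G.edgeSet \ {e}) ({e} : Set (Sym2 X)) :=
    Set.disjoint_singleton_right.mpr (fun h => h.2 rfl)
  have hdisj2 : Disjoint (G.edgeSet \ {e}) ({s(v, w)} : Set (Sym2 X)) := by
    rw [Set.disjoint_singleton_right]
    exact fun h => hvwG h.1
  have hGlen : graphLength G = (∑ᶠ f ∈ G.edgeSet \ {e}, edgeLen f) + edgeLen e := by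
    have hsplit : G.edgeSet = (G.edgeSet \ {e}) ∪ {e} :=
      (Set.diff_union_of_subset (Set.singleton_subset_iff.mpr heG)).symm
    rw [graphLength]
    conv_lhs => rw [hsplit]
    rw [finsum_mem_union hdisj1 hfinS (Set.finite_singleton e), finsum_mem_singleton]
  have hHlen : graphLength H = (∑ᶠ f ∈ G.edgeSet \ {e}, edgeLen f) + dist v w := by
    rw [graphLength, hHe, finsum_mem_union hdisj2 hfinS (Set.finite_singleton _),
      finsum_mem_singleton, edgeLen_mk]
  have hle := hG.2 H hHtree
  rw [hGlen, hHlen] at hle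
  linarith

/-- In an ultrametric space, the distance between the endpoints of a walk is at
most the maximum of the edge lengths. -/
lemma dist_le_max_edge {X : Type*} [MetricSpace X]
    (hU : ∀ x y z : X, dist x z ≤ max (dist x y) (dist y z))
    {G : SimpleGraph X} {v w : X} (p : G.Walk v w) :
    dist v w = 0 ∨ ∃ e ∈ p.edges, dist v w ≤ edgeLen e := by
  induction p with
  | nil => exact Or.inl (dist_self _)
  | @cons x u y ha q ih =>
    rcases le_max_iff.mp (hU x u y) with h1 | h2
    · right
      exact ⟨s(x, u), by simp, by rw [edgeLen_mk]; exact h1⟩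
    · rcases ih with h0 | ⟨e, hel, hle⟩
      · left
        have := h2.trans (le_of_eq h0)
        have := dist_nonneg (x := x) (y := y)
        linarith
      · right
        exact ⟨e, by simp [hel], h2.trans hle⟩

/-- A finite metric space `X` is ultrametric if and only if, for a minimal
spanning tree `G` on `X` and any distinct `v, w ∈ X`, the distance `|vw|`
equals the maximum of the edge lengths on the unique path in `G` from `v`
to `w`. -/
theorem ultrametric_iff_pathMax {X : Type*} [MetricSpace X] [Finite X]
    (G : SimpleGraph X) (hG : IsMST G) :
    (∀ x y z : X, dist x z ≤ max (dist x y) (dist y z)) ↔ PathMaxProperty G := by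
  constructor
  · intro hU v w hvw p hp
    have part2 : ∀ e ∈ p.edges, edgeLen e ≤ dist v w :=
      fun e he => edgeLen_le_of_isMST hG hvw p hp he
    refine ⟨?_, part2⟩
    rcases dist_le_max_edge hU p with h0 | ⟨e, he, hle⟩
    · exact absurd (dist_eq_zero.mp h0) hvw
    · exact ⟨e, he, le_antisymm (part2 e he) hle⟩
  · intro hPM x y z
    classical
    by_cases hxz : x = z
    · subst hxz
      simp only [dist_self]
      exact le_max_of_le_left dist_nonneg
    by_cases hxy : x = y
    · subst hxy
      exact le_max_right _ _
    by_cases hyz : y = z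
    · subst hyz
      exact le_max_left _ _
    obtain ⟨q1⟩ := hG.1.isConnected.preconnected x y
    obtain ⟨q2⟩ := hG.1.isConnected.preconnected y z
    set p1 := q1.bypass with hp1
    set p2 := q2.bypass with hp2
    obtain ⟨⟨e, her, hee⟩, _⟩ :=
      hPM x z hxz (p1.append p2).bypass (SimpleGraph.Walk.bypass_isPath _)
    have hmem : e ∈ p1.edges ∨ e ∈ p2.edges := by
      have := SimpleGraph.Walk.edges_bypass_subset _ her
      rw [SimpleGraph.Walk.edges_append] at this
      exact List.mem_append.mp this
    rcases hmem with h | h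
    · have hle := (hPM x y hxy p1 (SimpleGraph.Walk.bypass_isPath _)).2 e h
      rw [hee] at hle
      exact le_trans hle (le_max_left _ _)
    · have hle := (hPM y z hyz p2 (SimpleGraph.Walk.bypass_isPath _)).2 e h
      rw [hee] at hle
      exact le_trans hle (le_max_right _ _)
end

section
/- Let X be a finite metric space and suppose there exists a spanning tree G on X such that for all distinct v, w ∈ X, |vw| equals the maximum edge length along the unique G-path from v to w. Then X is ultrametric. -/
open Metric

/-- If a finite metric space `X` admits a spanning tree `G` such that for all
distinct `v, w ∈ X` the distance `|vw|` equals the maximum edge length along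
the unique path in `G` from `v` to `w`, then `X` is ultrametric. -/
theorem ultrametric_of_pathMax {X : Type*} [MetricSpace X] [Finite X]
    (G : SimpleGraph X) (hG : G.IsTree) (hmax : PathMaxProperty G) :
    ∀ x y z : X, dist x z ≤ max (dist x y) (dist y z) := by
  classical
  intro x y z
  rcases eq_or_ne x z with rfl | hxz
  · simp [le_max_iff, dist_nonneg]
  rcases eq_or_ne x y with rfl | hxy
  · exact le_max_right _ _
  rcases eq_or_ne y z with rfl | hyz
  · exact le_max_left _ _
  obtain ⟨w1⟩ := hG.isConnected.preconnected x y
  obtain ⟨w2⟩ := hG.isConnected.preconnected y z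
  set p1 := w1.toPath
  set p2 := w2.toPath
  set W := (p1 : G.Walk x y).append (p2 : G.Walk y z)
  set P := W.toPath
  obtain ⟨e, heP, he⟩ := (hmax x z hxz P.1 P.2).1
  have heW : e ∈ W.edges := SimpleGraph.Walk.edges_toPath_subset W heP
  rw [SimpleGraph.Walk.edges_append, List.mem_append] at heW
  rcases heW with h1 | h2
  · have := (hmax x y hxy p1.1 p1.2).2 e h1
    rw [he] at this
    exact le_max_of_le_left this
  · have := (hmax y z hyz p2.1 p2.2).2 e h2
    rw [he] at this
    exact le_max_of_le_right this
end
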